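/- Let p be a prime and r, s ≥ 1 integers. The (r+s-1)-th term of the descending p-central series of U_r(Z/p^s Z) is trivial, where the descending p-central series of a group G is defined by G^{(1)} = G, G^{(i+1)} = (G^{(i)})^p [G^{(i)}, G]. -/

import Mathlib

/-- An upper-triangular unipotent matrix: zeros below the diagonal, ones on the diagonal. -/
def IsUnipotentUpper {R : Type*} [CommRing R] {n : ℕ} (A : Matrix (Fin n) (Fin n) R) : Prop :=
  (∀ i j : Fin n, j < i → A i j = 0) ∧ ∀ i : Fin n, A i i = 1

/-- The group `U_n(R)` of upper-triangular unipotent `n × n` matrices over `R`. -/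
def UnipotentGrp (R : Type*) [CommRing R] (n : ℕ) : Subgroup (Matrix (Fin n) (Fin n) R)ˣ :=
  Subgroup.closure {A : (Matrix (Fin n) (Fin n) R)ˣ |
    IsUnipotentUpper ((A : Matrix (Fin n) (Fin n) R))}

open scoped commutatorElement

/-- One step of the descending `p`-central series: `H ↦ H^p [H, G]`. -/
def pCentralStep (p : ℕ) {G : Type*} [Group G] (H : Subgroup G) : Subgroup G :=
  Subgroup.closure ({g | ∃ x ∈ H, g = x ^ p} ∪ {g | ∃ x ∈ H, ∃ y : G, g = ⁅x, y⁆})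

/-- The descending `p`-central series `G^(1) = G`, `G^(i+1) = (G^(i))^p [G^(i), G]`,
indexed so that `pCentralSeries p G i = G^(i)` for `i ≥ 1` (with junk value `⊤` at `0`). -/
def pCentralSeries (p : ℕ) (G : Type*) [Group G] : ℕ → Subgroup G
  | 0 => ⊤
  | 1 => ⊤
  | (n + 2) => pCentralStep p (pCentralSeries p G (n + 1))


namespace Stmt11Aux

/-- The filtration set: strictly upper triangular, entry at distance `d` from the diagonal
divisible by `p^(k-d)`. -/
def memJ (p s r k : ℕ) (N : Matrix (Fin r) (Fin r) (ZMod (p ^ s))) : Prop :=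
  (∀ i j : Fin r, j.val ≤ i.val → N i j = 0) ∧
  ∀ i j : Fin r, (p : ZMod (p ^ s)) ^ (k - (j.val - i.val)) ∣ N i j

variable {p s r : ℕ}

theorem memJ_zero (k : ℕ) : memJ p s r k 0 :=
  ⟨fun _ _ _ => rfl, fun _ _ => dvd_zero _⟩

theorem memJ_add {k : ℕ} {N M : Matrix (Fin r) (Fin r) (ZMod (p ^ s))}
    (hN : memJ p s r k N) (hM : memJ p s r k M) : memJ p s r k (N + M) :=
  ⟨fun i j h => by simp [Matrix.add_apply, hN.1 i j h, hM.1 i j h],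
   fun i j => dvd_add (hN.2 i j) (hM.2 i j)⟩

theorem memJ_neg {k : ℕ} {N : Matrix (Fin r) (Fin r) (ZMod (p ^ s))}
    (hN : memJ p s r k N) : memJ p s r k (-N) :=
  ⟨fun i j h => by simp [Matrix.neg_apply, hN.1 i j h],
   fun i j => (dvd_neg).2 (hN.2 i j)⟩

theorem memJ_mono {k l : ℕ} (hkl : k ≤ l) {N : Matrix (Fin r) (Fin r) (ZMod (p ^ s))}
    (hN : memJ p s r l N) : memJ p s r k N :=
  ⟨hN.1, fun i j => dvd_trans (pow_dvd_pow _ (by omega)) (hN.2 i j)⟩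

theorem memJ_mul {k l : ℕ} {N M : Matrix (Fin r) (Fin r) (ZMod (p ^ s))}
    (hN : memJ p s r k N) (hM : memJ p s r l M) : memJ p s r (k + l) (N * M) := by
  constructor
  · intro i j hji
    rw [Matrix.mul_apply]
    refine Finset.sum_eq_zero fun m _ => ?_
    rcases le_or_gt m.val i.val with h | h
    · rw [hN.1 i m h, zero_mul]
    · rw [hM.1 m j (by omega), mul_zero]
  · intro i j
    rw [Matrix.mul_apply]
    refine Finset.dvd_sum fun m _ => ?_
    rcases le_or_gt m.val i.val with h | h
    · rw [hN.1 i m h, zero_mul]; exact dvd_zero _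
    rcases le_or_gt j.val m.val with h' | h'
    · rw [hM.1 m j h', mul_zero]; exact dvd_zero _
    · have h1 := hN.2 i m
      have h2 := hM.2 m j
      calc (p : ZMod (p ^ s)) ^ (k + l - (j.val - i.val))
          ∣ (p : ZMod (p ^ s)) ^ ((k - (m.val - i.val)) + (l - (j.val - m.val))) :=
            pow_dvd_pow _ (by omega)
        _ ∣ N i m * M m j := by rw [pow_add]; exact mul_dvd_mul h1 h2

theorem memJ_pow {k : ℕ} {N : Matrix (Fin r) (Fin r) (ZMod (p ^ s))}
    (hN : memJ p s r k N) : ∀ m : ℕ, memJ p s r k (N ^ (m + 1))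
  | 0 => by simpa using hN
  | m + 1 => by
    rw [pow_succ]
    exact memJ_mono (Nat.le_add_left k k) (memJ_mul (memJ_pow hN m) hN)

theorem strictUpper_pow {N : Matrix (Fin r) (Fin r) (ZMod (p ^ s))}
    (h0 : ∀ i j : Fin r, j.val ≤ i.val → N i j = 0) :
    ∀ m : ℕ, ∀ i j : Fin r, j.val < i.val + m → (N ^ m) i j = 0
  | 0 => fun i j h => by
      rw [pow_zero, Matrix.one_apply_ne (by intro he; subst he; omega)]
  | m + 1 => fun i j h => by
      rw [pow_succ, Matrix.mul_apply]
      refine Finset.sum_eq_zero fun t _ => ?_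
      rcases le_or_gt j.val t.val with ht | ht
      · rw [h0 t j ht, mul_zero]
      · rcases lt_or_ge t.val (i.val + m) with ht' | ht'
        · rw [strictUpper_pow h0 m i t ht', zero_mul]
        · omega

theorem strictUpper_pow_self {N : Matrix (Fin r) (Fin r) (ZMod (p ^ s))}
    (h0 : ∀ i j : Fin r, j.val ≤ i.val → N i j = 0) : N ^ r = 0 := by
  ext i j
  rw [strictUpper_pow h0 r i j (by omega), Matrix.zero_apply]


theorem memJ_sum {k : ℕ} {ι : Type*} {t : Finset ι}
    {f : ι → Matrix (Fin r) (Fin r) (ZMod (p ^ s))}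
    (h : ∀ i ∈ t, memJ p s r k (f i)) : memJ p s r k (∑ i ∈ t, f i) :=
  Finset.sum_induction f _ (fun _ _ => memJ_add) (memJ_zero k) h

theorem memJ_geom {k : ℕ} {N : Matrix (Fin r) (Fin r) (ZMod (p ^ s))}
    (hN : memJ p s r k N) (hr : 0 < r) :
    memJ p s r k ((∑ i ∈ Finset.range r, (-N) ^ i) - 1) := by
  rw [Finset.range_eq_Ico, Finset.sum_eq_sum_Ico_succ_bot hr]
  simp only [pow_zero]
  rw [add_sub_cancel_left]
  refine memJ_sum fun i hi => ?_
  rw [Finset.mem_Ico] at hi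
  obtain ⟨m, rfl⟩ : ∃ m, i = m + 1 := ⟨i - 1, by omega⟩
  exact memJ_pow (memJ_neg hN) m

/-- The filtration subgroups of the unit group. -/
def FiltGrp (p s r k : ℕ) : Subgroup (Matrix (Fin r) (Fin r) (ZMod (p ^ s)))ˣ where
  carrier := {A | memJ p s r k ((A : Matrix (Fin r) (Fin r) (ZMod (p ^ s))) - 1)}
  one_mem' := by simpa using memJ_zero k
  mul_mem' := by
    intro a b ha hb
    have key : (↑(a * b) : Matrix (Fin r) (Fin r) (ZMod (p ^ s))) - 1
        = ((a : Matrix (Fin r) (Fin r) (ZMod (p ^ s))) - 1) * ((b : Matrix (Fin r) (Fin r) (ZMod (p ^ s))) - 1)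
          + (((a : Matrix (Fin r) (Fin r) (ZMod (p ^ s))) - 1) + ((b : Matrix (Fin r) (Fin r) (ZMod (p ^ s))) - 1)) := by
      rw [Units.val_mul]; noncomm_ring
    show memJ p s r k _
    rw [key]
    exact memJ_add (memJ_mono (Nat.le_add_right k k) (memJ_mul ha hb)) (memJ_add ha hb)
  inv_mem' := by
    intro a ha
    set N : Matrix (Fin r) (Fin r) (ZMod (p ^ s)) := (a : Matrix (Fin r) (Fin r) (ZMod (p ^ s))) - 1 with hNdef
    have hN : memJ p s r k N := ha
    show memJ p s r k _
    rcases Nat.eq_zero_or_pos r with hr | hr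
    · subst hr
      exact ⟨fun i => absurd i.2 (by omega), fun i => absurd i.2 (by omega)⟩
    have hnil : (-N) ^ r = 0 := by
      rw [neg_pow]
      rw [strictUpper_pow_self hN.1, mul_zero]
    have hgeom : ((a : Matrix (Fin r) (Fin r) (ZMod (p ^ s)))) *
        (∑ i ∈ Finset.range r, (-N) ^ i) = 1 := by
      have h1 : (a : Matrix (Fin r) (Fin r) (ZMod (p ^ s))) = 1 + N := by
        rw [hNdef]; noncomm_ring
      have := mul_geom_sum (R := Matrix (Fin r) (Fin r) (ZMod (p ^ s))) (-N) r
      -- (−N − 1) * ∑ (−N)^i = (−N)^r − 1 = −1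
      rw [hnil] at this
      calc (a : Matrix (Fin r) (Fin r) (ZMod (p ^ s))) * ∑ i ∈ Finset.range r, (-N) ^ i
          = -((-N - 1) * ∑ i ∈ Finset.range r, (-N) ^ i) := by rw [h1]; noncomm_ring
        _ = 1 := by rw [this]; noncomm_ring
    have hval : (↑a⁻¹ : Matrix (Fin r) (Fin r) (ZMod (p ^ s)))
        = ∑ i ∈ Finset.range r, (-N) ^ i := Units.inv_eq_of_mul_eq_one_right hgeom
    rw [hval]
    exact memJ_geom hN hr

theorem mem_filtGrp_iff {k : ℕ} {A : (Matrix (Fin r) (Fin r) (ZMod (p ^ s)))ˣ} :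
    A ∈ FiltGrp p s r k ↔ memJ p s r k ((A : Matrix (Fin r) (Fin r) (ZMod (p ^ s))) - 1) :=
  by unfold FiltGrp; exact Iff.rfl

theorem filtGrp_mono {k l : ℕ} (h : k ≤ l) : FiltGrp p s r l ≤ FiltGrp p s r k :=
  fun _ hA => memJ_mono h hA


theorem memJ_mul_natCast {a c : ℕ} {M : Matrix (Fin r) (Fin r) (ZMod (p ^ s))}
    (hM : memJ p s r a M) (hc : p ∣ c) :
    memJ p s r (a + 1) (M * (c : Matrix (Fin r) (Fin r) (ZMod (p ^ s)))) := by
  have h : M * (c : Matrix (Fin r) (Fin r) (ZMod (p ^ s))) = c • M := by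
    rw [← (Nat.cast_commute c M).eq, ← nsmul_eq_mul]
  rw [h]
  obtain ⟨t, rfl⟩ := hc
  constructor
  · intro i j hji
    simp [Matrix.smul_apply, hM.1 i j hji]
  · intro i j
    have hd : (p : ZMod (p ^ s)) ^ (a + 1 - (j.val - i.val))
        ∣ (p : ZMod (p ^ s)) ^ (a - (j.val - i.val)) * (p : ZMod (p ^ s)) := by
      rw [← pow_succ]
      exact pow_dvd_pow _ (by omega)
    have := mul_dvd_mul (hM.2 i j) (dvd_refl ((p : ZMod (p ^ s)) * (t : ZMod (p ^ s))))
    calc (p : ZMod (p ^ s)) ^ (a + 1 - (j.val - i.val))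
        ∣ ((p : ZMod (p ^ s)) ^ (a - (j.val - i.val)) * (p : ZMod (p ^ s)))
            * (t : ZMod (p ^ s)) := Dvd.dvd.mul_right hd _
      _ = (p : ZMod (p ^ s)) ^ (a - (j.val - i.val)) * ((p : ZMod (p ^ s)) * (t : ZMod (p ^ s))) := by ring
      _ ∣ M i j * ((p : ZMod (p ^ s)) * (t : ZMod (p ^ s))) :=
            mul_dvd_mul_right (hM.2 i j) _
      _ = ((p * t) • M) i j := by
            simp [Matrix.smul_apply, nsmul_eq_mul]
            ring

theorem memJ_pow_p (hp : p.Prime) {k : ℕ} (hk : 1 ≤ k)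
    {N : Matrix (Fin r) (Fin r) (ZMod (p ^ s))} (hN : memJ p s r k N) :
    memJ p s r (k + 1) (N ^ p) := by
  have h2 : 2 ≤ p := hp.two_le
  have h1 : N ^ p = N ^ ((p - 2) + 1) * N := by
    rw [← pow_succ]
    congr 1
    omega
  rw [h1]
  exact memJ_mono (by omega) (memJ_mul (memJ_pow hN (p - 2)) hN)

theorem filt_pow (hp : p.Prime) {k : ℕ} (hk : 1 ≤ k)
    {A : (Matrix (Fin r) (Fin r) (ZMod (p ^ s)))ˣ} (hA : A ∈ FiltGrp p s r k) :
    A ^ p ∈ FiltGrp p s r (k + 1) := by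
  set N : Matrix (Fin r) (Fin r) (ZMod (p ^ s)) := (A : Matrix (Fin r) (Fin r) (ZMod (p ^ s))) - 1 with hNdef
  have hN : memJ p s r k N := hA
  show memJ p s r (k + 1) _
  have hval : (↑(A ^ p) : Matrix (Fin r) (Fin r) (ZMod (p ^ s))) = (1 + N) ^ p := by
    rw [Units.val_pow_eq_pow_val]
    congr 1
    rw [hNdef]; noncomm_ring
  rw [hval, (Commute.one_left N).add_pow, Finset.sum_range_succ]
  have hlast : (1 : Matrix (Fin r) (Fin r) (ZMod (p ^ s))) ^ p * N ^ (p - p) * (p.choose p : Matrix (Fin r) (Fin r) (ZMod (p ^ s))) = 1 := by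
    simp
  rw [hlast, add_sub_cancel_right]
  refine memJ_sum fun m hm => ?_
  rw [Finset.mem_range] at hm
  have hterm : (1 : Matrix (Fin r) (Fin r) (ZMod (p ^ s))) ^ m * N ^ (p - m) * (p.choose m : Matrix (Fin r) (Fin r) (ZMod (p ^ s)))
      = N ^ (p - m) * (p.choose m : Matrix (Fin r) (Fin r) (ZMod (p ^ s))) := by
    rw [one_pow, one_mul]
  rw [hterm]
  rcases Nat.eq_zero_or_pos m with rfl | hm1
  · simpa using memJ_pow_p hp hk hN
  · have hdvd : p ∣ p.choose m := hp.dvd_choose_self (by omega) hm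
    have hpm : memJ p s r k (N ^ ((p - m - 1) + 1)) := memJ_pow hN (p - m - 1)
    have : p - m = (p - m - 1) + 1 := by omega
    rw [this]
    exact memJ_mul_natCast hpm hdvd

theorem filt_comm {k : ℕ} (hk : 1 ≤ k)
    {A B : (Matrix (Fin r) (Fin r) (ZMod (p ^ s)))ˣ}
    (hA : A ∈ FiltGrp p s r k) (hB : B ∈ FiltGrp p s r 1) :
    ⁅A, B⁆ ∈ FiltGrp p s r (k + 1) := by
  set N : Matrix (Fin r) (Fin r) (ZMod (p ^ s)) := (A : Matrix (Fin r) (Fin r) (ZMod (p ^ s))) - 1 with hNdef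
  set M : Matrix (Fin r) (Fin r) (ZMod (p ^ s)) := (B : Matrix (Fin r) (Fin r) (ZMod (p ^ s))) - 1 with hMdef
  have hN : memJ p s r k N := hA
  have hM : memJ p s r 1 M := hB
  have hWmem : (A⁻¹ * B⁻¹) ∈ FiltGrp p s r 1 :=
    mul_mem (filtGrp_mono hk (inv_mem hA)) (inv_mem hB)
  set W : Matrix (Fin r) (Fin r) (ZMod (p ^ s)) := (↑(A⁻¹ * B⁻¹) : Matrix (Fin r) (Fin r) (ZMod (p ^ s))) with hWdef
  have hW : memJ p s r 1 (W - 1) := hWmem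
  show memJ p s r (k + 1) _
  have hcomm : (↑⁅A, B⁆ : Matrix (Fin r) (Fin r) (ZMod (p ^ s)))
      = (A : Matrix (Fin r) (Fin r) (ZMod (p ^ s))) * (B : Matrix (Fin r) (Fin r) (ZMod (p ^ s))) * W := by
    rw [hWdef, commutatorElement_def]
    simp [Units.val_mul, mul_assoc]
  have hBA : (B : Matrix (Fin r) (Fin r) (ZMod (p ^ s))) * (A : Matrix (Fin r) (Fin r) (ZMod (p ^ s))) * W = 1 := by
    have : B * A * (A⁻¹ * B⁻¹) = 1 := by group
    calc (B : Matrix (Fin r) (Fin r) (ZMod (p ^ s))) * (A : Matrix (Fin r) (Fin r) (ZMod (p ^ s))) * W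
        = (↑(B * A * (A⁻¹ * B⁻¹)) : Matrix (Fin r) (Fin r) (ZMod (p ^ s))) := by
          rw [hWdef]; simp [Units.val_mul, mul_assoc]
      _ = 1 := by rw [this, Units.val_one]
  have key : (↑⁅A, B⁆ : Matrix (Fin r) (Fin r) (ZMod (p ^ s))) - 1
      = (N * M - M * N) * (1 + (W - 1)) := by
    rw [hcomm, hNdef, hMdef]
    have expand : ((A : Matrix (Fin r) (Fin r) (ZMod (p ^ s))) - 1) * ((B : Matrix (Fin r) (Fin r) (ZMod (p ^ s))) - 1)
        - ((B : Matrix (Fin r) (Fin r) (ZMod (p ^ s))) - 1) * ((A : Matrix (Fin r) (Fin r) (ZMod (p ^ s))) - 1)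
        = (A : Matrix (Fin r) (Fin r) (ZMod (p ^ s))) * (B : Matrix (Fin r) (Fin r) (ZMod (p ^ s)))
          - (B : Matrix (Fin r) (Fin r) (ZMod (p ^ s))) * (A : Matrix (Fin r) (Fin r) (ZMod (p ^ s))) := by
      noncomm_ring
    rw [expand]
    have : (1 : Matrix (Fin r) (Fin r) (ZMod (p ^ s))) + (W - 1) = W := by noncomm_ring
    rw [this, sub_mul, hBA]
  rw [key, mul_add, mul_one]
  have hNM : memJ p s r (k + 1) (N * M - M * N) := by
    rw [sub_eq_add_neg]
    exact memJ_add (memJ_mul hN hM) (memJ_neg (memJ_mono (by omega) (memJ_mul hM hN)))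
  exact memJ_add hNM (memJ_mono (by omega) (memJ_mul hNM hW))

end Stmt11Aux

open Stmt11Aux in
theorem unipotent_le_filt (p s r : ℕ) :
    UnipotentGrp (ZMod (p ^ s)) r ≤ FiltGrp p s r 1 := by
  rw [UnipotentGrp]
  refine (Subgroup.closure_le _).2 ?_
  rintro A ⟨h0, h1⟩
  have hzero : ∀ i j : Fin r, j.val ≤ i.val →
      ((A : Matrix (Fin r) (Fin r) (ZMod (p ^ s))) - 1) i j = 0 := by
    intro i j hji
    rw [Matrix.sub_apply]
    rcases eq_or_lt_of_le hji with h | h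
    · have hij : j = i := Fin.ext h
      subst hij
      rw [h1 j, Matrix.one_apply_eq, sub_self]
    · rw [h0 i j h, Matrix.one_apply_ne (by intro he; rw [he] at h; omega), sub_zero]
  refine ⟨hzero, fun i j => ?_⟩
  rcases le_or_gt j.val i.val with h | h
  · rw [hzero i j h]
    exact dvd_zero _
  · have he : 1 - (j.val - i.val) = 0 := by omega
    rw [he, pow_zero]
    exact one_dvd _

open Stmt11Aux in
/-- For a prime `p` and `r, s ≥ 1`, the `(r+s-1)`-th term of the descending
`p`-central series of `U_r(ℤ/p^sℤ)` is trivial. -/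
theorem stmt11 (p r s : ℕ) (hp : p.Prime) (hr : 1 ≤ r) (hs : 1 ≤ s) :
    pCentralSeries p ↥(UnipotentGrp (ZMod (p ^ s)) r) (r + s - 1) = ⊥ := by
  set G := UnipotentGrp (ZMod (p ^ s)) r with hGdef
  have hG1 : G ≤ FiltGrp p s r 1 := unipotent_le_filt p s r
  have key : ∀ n : ℕ, pCentralSeries p ↥G (n + 1) ≤ (FiltGrp p s r (n + 1)).comap G.subtype := by
    intro n
    induction n with
    | zero =>
      intro x _
      exact hG1 x.2
    | succ n ih =>
      have hdef : pCentralSeries p ↥G (n + 2) = pCentralStep p (pCentralSeries p ↥G (n + 1)) := rfl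
      rw [hdef, pCentralStep]
      refine (Subgroup.closure_le _).2 ?_
      rintro g (⟨x, hx, rfl⟩ | ⟨x, hx, y, rfl⟩)
      · have hxF : (x : (Matrix (Fin r) (Fin r) (ZMod (p ^ s)))ˣ) ∈ FiltGrp p s r (n + 1) := ih hx
        show ((x ^ p : ↥G) : (Matrix (Fin r) (Fin r) (ZMod (p ^ s)))ˣ) ∈ FiltGrp p s r (n + 2)
        rw [SubgroupClass.coe_pow]
        exact filt_pow hp (by omega) hxF
      · have hxF : (x : (Matrix (Fin r) (Fin r) (ZMod (p ^ s)))ˣ) ∈ FiltGrp p s r (n + 1) := ih hx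
        show ((⁅x, y⁆ : ↥G) : (Matrix (Fin r) (Fin r) (ZMod (p ^ s)))ˣ) ∈ FiltGrp p s r (n + 2)
        have hco : ((⁅x, y⁆ : ↥G) : (Matrix (Fin r) (Fin r) (ZMod (p ^ s)))ˣ)
            = ⁅(x : (Matrix (Fin r) (Fin r) (ZMod (p ^ s)))ˣ), (y : (Matrix (Fin r) (Fin r) (ZMod (p ^ s)))ˣ)⁆ := by
          simp [commutatorElement_def]
        rw [hco]
        exact filt_comm (by omega) hxF (hG1 y.2)
  obtain ⟨n, hn⟩ : ∃ n, r + s - 1 = n + 1 := ⟨r + s - 2, by omega⟩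
  rw [hn]
  refine le_antisymm ?_ bot_le
  intro x hx
  have hxF : (x.val) ∈ FiltGrp p s r (n + 1) := key n hx
  have hm : memJ p s r (n + 1) ((x.val.val) - 1) := hxF
  have hz : (x.val.val) - 1 = 0 := by
    ext i j
    rw [Matrix.zero_apply]
    rcases le_or_gt j.val i.val with h | h
    · exact hm.1 i j h
    · have hdvd := hm.2 i j
      have he : (n + 1) - (j.val - i.val) = s + ((n + 1) - (j.val - i.val) - s) := by
        have hjr : j.val < r := j.2
        omega
      rw [he, pow_add] at hdvd
      have hp0 : (p : ZMod (p ^ s)) ^ s = 0 := by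
        rw [← Nat.cast_pow, ZMod.natCast_self]
      rw [hp0, zero_mul, zero_dvd_iff] at hdvd
      exact hdvd
  have hx1 : (x.val.val) = 1 := by
    have := sub_eq_zero.mp hz
    exact this
  rw [Subgroup.mem_bot]
  exact Subtype.ext (Units.ext hx1)
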